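/- Let (K, t, c, λ) be a weak mixed distributive law in Cat, with splitting (a, π, σ) of the canonical idempotent on tc, set α = π ∘ (μ c) ∘ (t σ), η₁ = π ∘ (η ▷ c) : c ⟶ a, and ε₁ = (t ◁ ε) ∘ σ : a ⟶ t. Then ε₁ ∘ α ∘ (t ◁ η₁) = (ε ▷ t) ∘ λ (third diagram of the key Lemma of Böhm–Lack–Street). -/
import Mathlib


open CategoryTheory

universe v₁ u₁ v₂ u₂

variable {K : Type u₁} [Category.{v₁} K]

/-- A weak mixed distributive law `λ : tc ⟶ ct` between a monad `t` and a comonad `c`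
on a category `K`, satisfying the four axioms of Böhm–Lack–Street, stated componentwise. -/
structure WeakMixedDistLaw (t : CategoryTheory.Monad K) (c : CategoryTheory.Comonad K) where
  l : (c.toFunctor ⋙ t.toFunctor) ⟶ (t.toFunctor ⋙ c.toFunctor)
  mul_compat : ∀ X : K, t.μ.app (c.obj X) ≫ l.app X =
    t.map (l.app X) ≫ l.app (t.obj X) ≫ c.map (t.μ.app X)
  comul_compat : ∀ X : K, t.map (c.δ.app X) ≫ l.app (c.obj X) ≫ c.map (l.app X) =
    l.app X ≫ c.δ.app (t.obj X)
  weak_unit : ∀ X : K, t.η.app (c.obj X) ≫ l.app X =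
    c.δ.app X ≫ c.map (t.η.app (c.obj X)) ≫ c.map (l.app X) ≫ c.map (c.ε.app (t.obj X))
  weak_counit : ∀ X : K, l.app X ≫ c.ε.app (t.obj X) =
    t.map (t.η.app (c.obj X)) ≫ t.map (l.app X) ≫ t.map (c.ε.app (t.obj X)) ≫ t.μ.app X

/-- Third diagram of the key Lemma: ε₁ ∘ α ∘ (t η₁) = (ε t) ∘ λ,
where η₁ = π ∘ (η c) and ε₁ = (t ε) ∘ σ. -/
theorem eps_one_linear (t : CategoryTheory.Monad K) (c : CategoryTheory.Comonad K)
    (W : WeakMixedDistLaw t c) (a : K ⥤ K) (π : (c.toFunctor ⋙ t.toFunctor) ⟶ a) (σ : a ⟶ (c.toFunctor ⋙ t.toFunctor))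
    (hsec : σ ≫ π = 𝟙 a)
    (hsplit : ∀ X : K, π.app X ≫ σ.app X =
      t.map (c.δ.app X) ≫ W.l.app (c.obj X) ≫ c.ε.app (t.obj (c.obj X))) :
    ∀ X : K,
      t.map (t.η.app (c.obj X) ≫ π.app X) ≫
        (t.map (σ.app X) ≫ t.μ.app (c.obj X) ≫ π.app X) ≫
        (σ.app X ≫ t.map (c.ε.app X)) =
      W.l.app X ≫ c.ε.app (t.obj X) := by
  intro X
  set Θ : t.obj (c.obj X) ⟶ t.obj (c.obj X) :=
    t.map (c.δ.app X) ≫ W.l.app (c.obj X) ≫ c.ε.app (t.obj (c.obj X)) with hΘ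
  -- Θ is idempotent
  have hidem : Θ ≫ Θ = Θ := by
    have h := congrArg (fun n => n.app X) hsec
    simp only [NatTrans.comp_app, NatTrans.id_app] at h
    rw [hΘ, ← hsplit X]
    slice_lhs 2 3 => rw [h]
    simp
  -- Θ ≫ t(ε) = l ≫ ε
  have hinv : Θ ≫ t.map (c.ε.app X) = W.l.app X ≫ c.ε.app (t.obj X) := by
    have hnatε : c.ε.app (t.obj (c.obj X)) ≫ t.map (c.ε.app X) =
        c.map (t.map (c.ε.app X)) ≫ c.ε.app (t.obj X) :=
      (c.ε.naturality (t.map (c.ε.app X))).symm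
    have hnatl : t.map (c.map (c.ε.app X)) ≫ W.l.app X =
        W.l.app (c.obj X) ≫ c.map (t.map (c.ε.app X)) :=
      W.l.naturality (c.ε.app X)
    rw [hΘ]
    slice_lhs 3 4 => rw [hnatε]
    slice_lhs 2 3 => rw [← hnatl]
    slice_lhs 1 2 => rw [← t.toFunctor.map_comp, c.right_counit, t.toFunctor.map_id]
    simp
  -- t(η) ≫ t(Θ) ≫ μ = Θ
  have hmid : t.map (t.η.app (c.obj X)) ≫ t.map Θ ≫ t.μ.app (c.obj X) = Θ := by
    rw [hΘ]
    simp only [Functor.map_comp]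
    have hη : t.η.app (c.obj X) ≫ t.map (c.δ.app X) =
        c.δ.app X ≫ t.η.app (c.obj (c.obj X)) := (t.η.naturality (c.δ.app X)).symm
    slice_lhs 1 2 => rw [← t.toFunctor.map_comp, hη, t.toFunctor.map_comp]
    have := (W.weak_counit (c.obj X)).symm
    slice_lhs 2 5 => rw [this]
  -- assemble
  have key : t.map (t.η.app (c.obj X) ≫ π.app X) ≫
        (t.map (σ.app X) ≫ t.μ.app (c.obj X) ≫ π.app X) ≫
        (σ.app X ≫ t.map (c.ε.app X)) =
      t.map (t.η.app (c.obj X)) ≫ t.map Θ ≫ t.μ.app (c.obj X) ≫ Θ ≫ t.map (c.ε.app X) := by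
    rw [hΘ, ← hsplit X]
    simp only [Functor.map_comp, Category.assoc]
  rw [key]
  calc t.map (t.η.app (c.obj X)) ≫ t.map Θ ≫ t.μ.app (c.obj X) ≫ Θ ≫ t.map (c.ε.app X)
      = (t.map (t.η.app (c.obj X)) ≫ t.map Θ ≫ t.μ.app (c.obj X)) ≫ Θ ≫ t.map (c.ε.app X) := by
        simp only [Category.assoc]
    _ = Θ ≫ Θ ≫ t.map (c.ε.app X) := by rw [hmid]
    _ = (Θ ≫ Θ) ≫ t.map (c.ε.app X) := by simp only [Category.assoc]
    _ = Θ ≫ t.map (c.ε.app X) := by rw [hidem]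
    _ = W.l.app X ≫ c.ε.app (t.obj X) := hinv
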